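/- Let a, b be positive real numbers and ν ∈ (0,1). Then (1−ν)a² + νb² ≥ (a^{1−ν}b^{ν})² + Σ_{k=0}^{∞} r_k [ a^{1−m_k/2^k} b^{m_k/2^k} − a^{1−(m_k+1)/2^k} b^{(m_k+1)/2^k} ]², where the infinite series is interpreted as its sum (the terms are nonnegative). -/

import Mathlib

/-- `r ν k`: the recursively defined coefficients, `r 0 = min {ν, 1-ν}`,
`r k = min {2 r (k-1), 1 - 2 r (k-1)}`. -/
noncomputable def r (ν : ℝ) : ℕ → ℝ
  | 0 => min ν (1 - ν)
  | k + 1 => min (2 * r ν k) (1 - 2 * r ν k)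

/-- `m ν k = ⌊2^k ν⌋`, as a real number. -/
noncomputable def m (ν : ℝ) (k : ℕ) : ℝ := ⌊2 ^ k * ν⌋

theorem stmt6 (a b ν : ℝ) (ha : 0 < a) (hb : 0 < b) (hν : ν ∈ Set.Ioo (0 : ℝ) 1) :
    (1 - ν) * a ^ 2 + ν * b ^ 2 ≥ (a ^ (1 - ν) * b ^ ν) ^ 2 +
      ∑' k : ℕ, r ν k *
        (a ^ (1 - m ν k / 2 ^ k) * b ^ (m ν k / 2 ^ k) -
          a ^ (1 - (m ν k + 1) / 2 ^ k) * b ^ ((m ν k + 1) / 2 ^ k)) ^ 2 := by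
  obtain ⟨hν0, hν1⟩ := hν
  set F : ℝ → ℝ := fun t => a ^ (1 - t) * b ^ t with hF
  set θ : ℕ → ℝ := fun k => Int.fract (2 ^ k * ν) with hθ
  set T : ℕ → ℝ := fun k =>
    r ν k * (F (m ν k / 2 ^ k) - F ((m ν k + 1) / 2 ^ k)) ^ 2 with hT
  set S : ℕ → ℝ := fun k =>
    (1 - θ k) * F (m ν k / 2 ^ k) ^ 2 + θ k * F ((m ν k + 1) / 2 ^ k) ^ 2 with hS
  have h2k : ∀ k : ℕ, (0:ℝ) < 2 ^ k := fun k => by positivity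
  have hFpos : ∀ t, 0 < F t := fun t =>
    mul_pos (Real.rpow_pos_of_pos ha _) (Real.rpow_pos_of_pos hb _)
  -- F of midpoint squared is the product
  have hFmul : ∀ s t : ℝ, F s * F t = a ^ (2 - s - t) * b ^ (s + t) := by
    intro s t
    simp only [hF]
    rw [mul_mul_mul_comm, ← Real.rpow_add ha, ← Real.rpow_add hb]
    congr 1 <;> congr 1 <;> ring
  have hFsq : ∀ s t : ℝ, F ((s + t) / 2) ^ 2 = F s * F t := by
    intro s t
    rw [sq, hFmul, hFmul]
    congr 1 <;> congr 1 <;> ring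
  have hθ0 : ∀ k, 0 ≤ θ k := fun k => Int.fract_nonneg _
  have hθ1 : ∀ k, θ k < 1 := fun k => Int.fract_lt_one _
  have hmθ : ∀ k, m ν k + θ k = 2 ^ k * ν := by
    intro k
    simpa [m, hθ] using Int.floor_add_fract ((2:ℝ) ^ k * ν)
  have hsplit : ∀ k : ℕ, (2:ℝ) ^ (k + 1) * ν = (⌊(2:ℝ) ^ k * ν⌋ : ℝ) + ((⌊(2:ℝ) ^ k * ν⌋ : ℝ) + 2 * θ k) := by
    intro k
    have := hmθ k
    simp only [m] at this
    rw [pow_succ]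
    nlinarith [this]
  -- the floor and fract recursions
  have hmrec : ∀ k : ℕ, m ν (k + 1) = 2 * m ν k + (⌊2 * θ k⌋ : ℝ) := by
    intro k
    have : (2:ℝ) ^ (k+1) * ν = ((⌊(2:ℝ) ^ k * ν⌋ : ℤ) : ℝ) + ((⌊(2:ℝ) ^ k * ν⌋ : ℝ) + 2 * θ k) := by
      simpa using hsplit k
    simp only [m, this, Int.floor_intCast_add]
    push_cast
    ring
  have hθrec : ∀ k : ℕ, θ (k + 1) = Int.fract (2 * θ k) := by
    intro k
    have h1 : (2:ℝ) ^ (k+1) * ν = ((2 * ⌊(2:ℝ) ^ k * ν⌋ : ℤ) : ℝ) + 2 * θ k := by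
      push_cast
      have := hsplit k
      linarith [this]
    rw [hθ]
    simp only
    rw [h1, Int.fract_intCast_add]
  -- r formula
  have hrmin : ∀ k : ℕ, r ν k = min (θ k) (1 - θ k) := by
    intro k
    induction k with
    | zero =>
      have : θ 0 = ν := by
        simp only [hθ, pow_zero, one_mul]
        exact Int.fract_eq_self.2 ⟨le_of_lt hν0, hν1⟩
      rw [r, this]
    | succ k ih =>
      rw [r, ih, hθrec k]
      rcases lt_or_ge (θ k) (1/2) with hc | hc
      · have h1 : min (θ k) (1 - θ k) = θ k := min_eq_left (by linarith [hθ0 k])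
        have hfr : Int.fract (2 * θ k) = 2 * θ k :=
          Int.fract_eq_self.2 ⟨by linarith [hθ0 k], by linarith⟩
        rw [h1, hfr]
      · have h1 : min (θ k) (1 - θ k) = 1 - θ k := min_eq_right (by linarith)
        have hfr : Int.fract (2 * θ k) = 2 * θ k - 1 := by
          have ha1 : Int.fract (2 * θ k - (1:ℤ)) = Int.fract (2 * θ k) :=
            Int.fract_sub_intCast _ _
          have ha2 : Int.fract (2 * θ k - (1:ℤ)) = 2 * θ k - 1 := by
            push_cast
            exact Int.fract_eq_self.2 ⟨by linarith, by linarith [hθ1 k]⟩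
          linarith [ha1, ha2]
        rw [h1, hfr,
          show (2:ℝ) * (1 - θ k) = 1 - (2 * θ k - 1) by ring,
          show (1:ℝ) - (1 - (2 * θ k - 1)) = 2 * θ k - 1 by ring, min_comm]
  have hrnn : ∀ k, 0 ≤ r ν k := by
    intro k
    rw [hrmin k]
    exact le_min (hθ0 k) (by linarith [hθ1 k])
  have hTnn : ∀ k, 0 ≤ T k := fun k => mul_nonneg (hrnn k) (sq_nonneg _)
  -- the one-step identity
  have hstep : ∀ k : ℕ, S k = S (k + 1) + T k := by
    intro k
    have hfloorθ : (⌊2 * θ k⌋ : ℝ) = if θ k < 1/2 then 0 else 1 := by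
      rcases lt_or_ge (θ k) (1/2) with hc | hc
      · rw [if_pos hc]
        norm_cast
        exact Int.floor_eq_zero_iff.2 ⟨by linarith [hθ0 k], by linarith⟩
      · rw [if_neg (not_lt.2 hc)]
        norm_cast
        rw [Int.floor_eq_iff]
        constructor
        · push_cast; linarith
        · push_cast; linarith [hθ1 k]
    rcases lt_or_ge (θ k) (1/2) with hc | hc
    · -- left half
      have hm1 : m ν (k + 1) = 2 * m ν k := by
        rw [hmrec k, hfloorθ, if_pos hc]; ring
      have hθ1' : θ (k + 1) = 2 * θ k := by
        rw [hθrec k, Int.fract_eq_self.2 ⟨by linarith [hθ0 k], by linarith⟩]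
      have hL : m ν (k + 1) / 2 ^ (k + 1) = m ν k / 2 ^ k := by
        rw [hm1, pow_succ]
        field_simp
      have hR : (m ν (k + 1) + 1) / 2 ^ (k + 1)
          = (m ν k / 2 ^ k + (m ν k + 1) / 2 ^ k) / 2 := by
        rw [hm1, pow_succ]
        field_simp
        ring
      have hrk : r ν k = θ k := by rw [hrmin k, min_eq_left (by linarith)]
      simp only [hS, hT, hθ1', hL, hR, hFsq, hrk]
      ring
    · -- right half
      have hm1 : m ν (k + 1) = 2 * m ν k + 1 := by
        rw [hmrec k, hfloorθ, if_neg (not_lt.2 hc)]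
      have hθ1' : θ (k + 1) = 2 * θ k - 1 := by
        rw [hθrec k]
        have ha1 : Int.fract (2 * θ k - (1:ℤ)) = Int.fract (2 * θ k) :=
          Int.fract_sub_intCast _ _
        have ha2 : Int.fract (2 * θ k - (1:ℤ)) = 2 * θ k - 1 := by
          push_cast
          exact Int.fract_eq_self.2 ⟨by linarith, by linarith [hθ1 k]⟩
        linarith [ha1, ha2]
      have hL : m ν (k + 1) / 2 ^ (k + 1)
          = (m ν k / 2 ^ k + (m ν k + 1) / 2 ^ k) / 2 := by
        rw [hm1, pow_succ]
        field_simp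
        ring
      have hR : (m ν (k + 1) + 1) / 2 ^ (k + 1) = (m ν k + 1) / 2 ^ k := by
        rw [hm1, pow_succ]
        field_simp
        ring
      have hrk : r ν k = 1 - θ k := by rw [hrmin k, min_eq_right (by linarith)]
      simp only [hS, hT, hθ1', hL, hR, hFsq, hrk]
      ring
  -- partial sums telescope
  have hsum : ∀ N : ℕ, ∑ k ∈ Finset.range N, T k = S 0 - S N := by
    intro N
    induction N with
    | zero => simp
    | succ N ih =>
      rw [Finset.sum_range_succ, ih, hstep N]
      ring
  -- S N is at least F ν ^ 2 by weighted AM-GM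
  have hpow : ∀ s w : ℝ, (F s ^ 2) ^ w = a ^ ((2 - 2 * s) * w) * b ^ (2 * s * w) := by
    intro s w
    rw [sq, hFmul]
    rw [Real.mul_rpow (Real.rpow_pos_of_pos ha _).le (Real.rpow_pos_of_pos hb _).le,
      ← Real.rpow_mul ha.le, ← Real.rpow_mul hb.le]
    congr 1 <;> congr 1 <;> ring
  have hSge : ∀ N : ℕ, F ν ^ 2 ≤ S N := by
    intro N
    have hw : (1 - θ N) + θ N = 1 := by ring
    have hgm := Real.geom_mean_le_arith_mean2_weighted
      (by linarith [hθ1 N]) (hθ0 N) (sq_nonneg (F (m ν N / 2 ^ N)))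
      (sq_nonneg (F ((m ν N + 1) / 2 ^ N))) hw
    refine le_trans (le_of_eq ?_) hgm
    have hLR : m ν N / 2 ^ N * (1 - θ N) + (m ν N + 1) / 2 ^ N * θ N = ν := by
      have h2 : (2:ℝ) ^ N ≠ 0 := (h2k N).ne'
      rw [div_mul_eq_mul_div, div_mul_eq_mul_div, ← add_div, div_eq_iff h2]
      linear_combination hmθ N
    rw [sq, hFmul, hpow, hpow, mul_mul_mul_comm, ← Real.rpow_add ha, ← Real.rpow_add hb]
    congr 1
    · congr 1
      linear_combination (2:ℝ) * hLR
    · congr 1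
      linear_combination (-2:ℝ) * hLR
  have htsum : ∑' k, T k ≤ S 0 - F ν ^ 2 := by
    apply Real.tsum_le_of_sum_range_le hTnn
    intro n
    rw [hsum n]
    linarith [hSge n]
  have hS0 : S 0 = (1 - ν) * a ^ 2 + ν * b ^ 2 := by
    have hm0 : m ν 0 = 0 := by
      simp only [m, pow_zero, one_mul]
      norm_cast
      exact Int.floor_eq_zero_iff.2 ⟨hν0.le, hν1⟩
    have hθ00 : θ 0 = ν := by
      simp only [hθ, pow_zero, one_mul]
      exact Int.fract_eq_self.2 ⟨hν0.le, hν1⟩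
    simp only [hS, hm0, hθ00, pow_zero]
    norm_num [hF, Real.rpow_zero, Real.rpow_one]
  rw [ge_iff_le]
  have key : F ν ^ 2 + ∑' k, T k ≤ (1 - ν) * a ^ 2 + ν * b ^ 2 := by
    rw [← hS0]; linarith [htsum]
  simpa only [hT, hF] using key
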